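/- The pair of polynomials f_1(x,y) = x^{108} + 1.1 y^{54} - 1.1 y and f_2(x,y) = y^{108} + 1.1 x^{54} - 1.1 x has at least 5 common roots in the open positive quadrant {(x,y) : x > 0, y > 0}. -/

import Mathlib

set_option maxHeartbeats 1000000

open Set

noncomputable def gg (x : ℝ) : ℝ := (11/10) * (x - x ^ (54 : ℕ))

noncomputable def ph (x : ℝ) : ℝ := (gg x) ^ ((108 : ℝ)⁻¹)

noncomputable def ps (x : ℝ) : ℝ := ph (ph x) - x

lemma pow_inv108 {x : ℝ} (hx : 0 ≤ x) : (x ^ (108 : ℕ)) ^ ((108 : ℝ)⁻¹) = x := by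
  rw [show ((108 : ℝ))⁻¹ = (((108 : ℕ) : ℝ))⁻¹ by norm_num]
  exact Real.pow_rpow_inv_natCast hx (by norm_num)

lemma inv108_pow {x : ℝ} (hx : 0 ≤ x) : (x ^ ((108 : ℝ)⁻¹)) ^ (108 : ℕ) = x := by
  rw [show ((108 : ℝ))⁻¹ = (((108 : ℕ) : ℝ))⁻¹ by norm_num]
  exact Real.rpow_inv_natCast_pow hx (by norm_num)

lemma cont_ps : Continuous ps := by
  have h : Continuous fun x : ℝ => x ^ ((108 : ℝ)⁻¹) := by
    rw [continuous_iff_continuousAt]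
    intro x
    exact Real.continuousAt_rpow_const x _ (Or.inr (by norm_num))
  have hg : Continuous gg := by
    unfold gg; fun_prop
  have hph : Continuous ph := h.comp hg
  exact (hph.comp hph).sub continuous_id

lemma ph_mem {t a b : ℝ} (ha : 0 ≤ a) (hb : 0 ≤ b) (h1 : a ^ (108 : ℕ) ≤ gg t)
    (h2 : gg t ≤ b ^ (108 : ℕ)) : a ≤ ph t ∧ ph t ≤ b := by
  constructor
  · calc a = (a ^ (108 : ℕ)) ^ ((108 : ℝ)⁻¹) := (pow_inv108 ha).symm
      _ ≤ (gg t) ^ ((108 : ℝ)⁻¹) :=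
        Real.rpow_le_rpow (pow_nonneg ha _) h1 (by norm_num)
  · calc ph t = (gg t) ^ ((108 : ℝ)⁻¹) := rfl
      _ ≤ (b ^ (108 : ℕ)) ^ ((108 : ℝ)⁻¹) := by
        refine Real.rpow_le_rpow ?_ h2 (by norm_num)
        exact le_trans (pow_nonneg ha _) h1
      _ = b := pow_inv108 hb

lemma ps_pos_of {t a b : ℝ} (ht : 0 ≤ t) (ha : 0 ≤ a) (hb : 0 ≤ b)
    (h1 : a ^ (108 : ℕ) ≤ gg t) (h2 : gg t ≤ b ^ (108 : ℕ))
    (h3 : t ^ (108 : ℕ) < 11/10 * (a - b ^ (54 : ℕ))) : 0 < ps t := by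
  obtain ⟨hu1, hu2⟩ := ph_mem ha hb h1 h2
  have hu0 : 0 ≤ ph t := le_trans ha hu1
  have h54 : (ph t) ^ (54 : ℕ) ≤ b ^ (54 : ℕ) := pow_le_pow_left₀ hu0 hu2 54
  have hgu : t ^ (108 : ℕ) < gg (ph t) := by
    unfold gg; nlinarith
  have : t < ph (ph t) := by
    calc t = (t ^ (108 : ℕ)) ^ ((108 : ℝ)⁻¹) := (pow_inv108 ht).symm
      _ < (gg (ph t)) ^ ((108 : ℝ)⁻¹) :=
        Real.rpow_lt_rpow (pow_nonneg ht _) hgu (by norm_num)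
      _ = ph (ph t) := rfl
  simpa [ps] using sub_pos.mpr this

lemma ps_neg_of {t a b : ℝ} (ht : 0 ≤ t) (ha : 0 ≤ a) (hb : 0 ≤ b) (hb1 : b ≤ 1)
    (h1 : a ^ (108 : ℕ) ≤ gg t) (h2 : gg t ≤ b ^ (108 : ℕ))
    (h3 : 11/10 * (b - a ^ (54 : ℕ)) < t ^ (108 : ℕ)) : ps t < 0 := by
  obtain ⟨hu1, hu2⟩ := ph_mem ha hb h1 h2
  have hu0 : 0 ≤ ph t := le_trans ha hu1
  have h54 : a ^ (54 : ℕ) ≤ (ph t) ^ (54 : ℕ) := pow_le_pow_left₀ ha hu1 54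
  have hle1 : (ph t) ^ (54 : ℕ) ≤ ph t := by
    calc (ph t) ^ (54 : ℕ) ≤ (ph t) ^ (1 : ℕ) :=
      pow_le_pow_of_le_one hu0 (le_trans hu2 hb1) (by norm_num)
    _ = ph t := pow_one _
  have hgu0 : 0 ≤ gg (ph t) := by unfold gg; nlinarith
  have hgu : gg (ph t) < t ^ (108 : ℕ) := by
    unfold gg at *; nlinarith
  have : ph (ph t) < t := by
    calc ph (ph t) = (gg (ph t)) ^ ((108 : ℝ)⁻¹) := rfl
      _ < (t ^ (108 : ℕ)) ^ ((108 : ℝ)⁻¹) :=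
        Real.rpow_lt_rpow hgu0 hgu (by norm_num)
      _ = t := pow_inv108 ht
  simpa [ps] using sub_neg.mpr this

-- sign facts at the seven rational test points
lemma s0 : 0 < ps (9/10) := by
  apply ps_pos_of (a := 4999/5000) (b := 9999/10000) <;> norm_num [gg]

lemma s1 : ps (92/100) < 0 := by
  apply ps_neg_of (a := 499999/500000) (b := 999999/1000000) <;> norm_num [gg]

lemma s2 : ps (934/1000) < 0 := by
  apply ps_neg_of (a := 99999/100000) (b := 1) <;> norm_num [gg]

lemma s3 : 0 < ps (95/100) := by
  apply ps_pos_of (a := 9997/10000) (b := 4999/5000) <;> norm_num [gg]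

lemma s4 : ps (995/1000) < 0 := by
  apply ps_neg_of (a := 987/1000) (b := 247/250) <;> norm_num [gg]

lemma s5 : 0 < ps (999992/1000000) := by
  apply ps_pos_of (a := 931/1000) (b := 233/250) <;> norm_num [gg]

lemma s6 : ps (999999/1000000) < 0 := by
  apply ps_neg_of (a := 913/1000) (b := 457/500) <;> norm_num [gg]

-- monotonicity of x - x^54
lemma hasDeriv_f (x : ℝ) :
    HasDerivAt (fun x : ℝ => x - x ^ (54 : ℕ)) (1 - 54 * x ^ (53 : ℕ)) x := by
  have h1 := hasDerivAt_id x
  have h2 := hasDerivAt_pow 54 x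
  simpa using h1.fun_sub h2

lemma mono_f : StrictMonoOn (fun x : ℝ => x - x ^ (54 : ℕ)) (Icc 0 (92/100)) := by
  apply strictMonoOn_of_deriv_pos (convex_Icc _ _)
  · fun_prop
  · intro x hx
    rw [interior_Icc] at hx
    rw [(hasDeriv_f x).deriv]
    have h1 : x ^ (53 : ℕ) ≤ (92/100 : ℝ) ^ (53 : ℕ) := pow_le_pow_left₀ hx.1.le hx.2.le 53
    have h2 : 54 * (92/100 : ℝ) ^ (53 : ℕ) < 1 := by norm_num
    nlinarith

lemma anti_f : StrictAntiOn (fun x : ℝ => x - x ^ (54 : ℕ)) (Icc (934/1000) 1) := by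
  apply strictAntiOn_of_deriv_neg (convex_Icc _ _)
  · fun_prop
  · intro x hx
    rw [interior_Icc] at hx
    rw [(hasDeriv_f x).deriv]
    have h1 : (934/1000 : ℝ) ^ (53 : ℕ) ≤ x ^ (53 : ℕ) := pow_le_pow_left₀ (by linarith [hx.1]) hx.1.le 53
    have h2 : 1 < 54 * (934/1000 : ℝ) ^ (53 : ℕ) := by norm_num
    nlinarith

lemma gg_lt_one₁ {x : ℝ} (h0 : 0 ≤ x) (h1 : x ≤ 92/100) : gg x < 1 := by
  have key : x - x ^ (54 : ℕ) ≤ 92/100 - (92/100 : ℝ) ^ (54 : ℕ) := by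
    rcases eq_or_lt_of_le h1 with h | h
    · rw [h]
    · exact (mono_f ⟨h0, h1⟩ ⟨by norm_num, le_refl _⟩ h).le
  have : (11:ℝ)/10 * (92/100 - (92/100 : ℝ) ^ (54 : ℕ)) < 1 := by norm_num
  unfold gg; nlinarith

lemma gg_lt_one₂ {x : ℝ} (h0 : 934/1000 ≤ x) (h1 : x ≤ 1) : gg x < 1 := by
  have key : x - x ^ (54 : ℕ) ≤ 934/1000 - (934/1000 : ℝ) ^ (54 : ℕ) := by
    rcases eq_or_lt_of_le h0 with h | h
    · rw [← h]
    · exact (anti_f ⟨le_refl _, by norm_num⟩ ⟨h0, h1⟩ h).le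
  have : (11:ℝ)/10 * (934/1000 - (934/1000 : ℝ) ^ (54 : ℕ)) < 1 := by norm_num
  unfold gg; nlinarith

lemma exists_root_pn {s t : ℝ} (hst : s ≤ t) (hs : 0 < ps s) (ht : ps t < 0) :
    ∃ c ∈ Icc s t, ps c = 0 := by
  have h := intermediate_value_Icc' hst cont_ps.continuousOn
  obtain ⟨c, hc, hc0⟩ := h ⟨ht.le, hs.le⟩
  exact ⟨c, hc, hc0⟩

lemma exists_root_np {s t : ℝ} (hst : s ≤ t) (hs : ps s < 0) (ht : 0 < ps t) :
    ∃ c ∈ Icc s t, ps c = 0 := by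
  have h := intermediate_value_Icc hst cont_ps.continuousOn
  obtain ⟨c, hc, hc0⟩ := h ⟨hs.le, ht.le⟩
  exact ⟨c, hc, hc0⟩

lemma root_spec {c : ℝ} (hc0 : 0 < c) (hc1 : c < 1) (hgc : gg c < 1) (hps : ps c = 0) :
    0 < c ∧ 0 < ph c ∧
      c ^ (108 : ℕ) + 1.1 * (ph c) ^ (54 : ℕ) - 1.1 * ph c = 0 ∧
      (ph c) ^ (108 : ℕ) + 1.1 * c ^ (54 : ℕ) - 1.1 * c = 0 := by
  have hc54 : c ^ (54 : ℕ) < c := by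
    calc c ^ (54 : ℕ) < c ^ (1 : ℕ) := pow_lt_pow_right_of_lt_one₀ hc0 hc1 (by norm_num)
    _ = c := pow_one _
  have hgpos : 0 < gg c := by unfold gg; nlinarith
  set y := ph c with hy
  have hy0 : 0 < y := Real.rpow_pos_of_pos hgpos _
  have hy1 : y < 1 := by
    rw [hy, ph]
    exact Real.rpow_lt_one hgpos.le hgc (by norm_num)
  have hy108 : y ^ (108 : ℕ) = gg c := inv108_pow hgpos.le
  have hy54 : y ^ (54 : ℕ) < y := by
    calc y ^ (54 : ℕ) < y ^ (1 : ℕ) := pow_lt_pow_right_of_lt_one₀ hy0 hy1 (by norm_num)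
    _ = y := pow_one _
  have hgy : 0 < gg y := by unfold gg; nlinarith
  have hphy : ph y = c := by
    have := hps
    unfold ps at this
    linarith [this]
  have hc108 : c ^ (108 : ℕ) = gg y := by
    rw [← hphy, ph]
    exact inv108_pow hgy.le
  have h11 : (1.1 : ℝ) = 11/10 := by norm_num
  refine ⟨hc0, hy0, ?_, ?_⟩
  · rw [hc108, h11]; unfold gg; ring
  · rw [hy108, h11]; unfold gg; ring

theorem stmt_6 :
    ∃ S : Finset (ℝ × ℝ), 5 ≤ S.card ∧ ∀ p ∈ S, 0 < p.1 ∧ 0 < p.2 ∧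
      p.1 ^ (108 : ℕ) + 1.1 * p.2 ^ (54 : ℕ) - 1.1 * p.2 = 0 ∧
      p.2 ^ (108 : ℕ) + 1.1 * p.1 ^ (54 : ℕ) - 1.1 * p.1 = 0 := by
  obtain ⟨c1, hc1, hr1⟩ := exists_root_pn (by norm_num : (9/10:ℝ) ≤ 92/100) s0 s1
  obtain ⟨c2, hc2, hr2⟩ := exists_root_np (by norm_num : (934/1000:ℝ) ≤ 95/100) s2 s3
  obtain ⟨c3, hc3, hr3⟩ := exists_root_pn (by norm_num : (95/100:ℝ) ≤ 995/1000) s3 s4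
  obtain ⟨c4, hc4, hr4⟩ := exists_root_np (by norm_num : (995/1000:ℝ) ≤ 999992/1000000) s4 s5
  obtain ⟨c5, hc5, hr5⟩ := exists_root_pn (by norm_num : (999992/1000000:ℝ) ≤ 999999/1000000) s5 s6
  -- root specs
  have sp1 := root_spec (by linarith [hc1.1]) (by linarith [hc1.2])
    (gg_lt_one₁ (by linarith [hc1.1]) hc1.2) hr1
  have sp2 := root_spec (by linarith [hc2.1]) (by linarith [hc2.2])
    (gg_lt_one₂ hc2.1 (by linarith [hc2.2])) hr2
  have sp3 := root_spec (by linarith [hc3.1]) (by linarith [hc3.2])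
    (gg_lt_one₂ (by linarith [hc3.1]) (by linarith [hc3.2])) hr3
  have sp4 := root_spec (by linarith [hc4.1]) (by linarith [hc4.2])
    (gg_lt_one₂ (by linarith [hc4.1]) (by linarith [hc4.2])) hr4
  have sp5 := root_spec (by linarith [hc5.1]) (by linarith [hc5.2])
    (gg_lt_one₂ (by linarith [hc5.1]) (by linarith [hc5.2])) hr5
  -- distinctness of the roots
  have d12 : c1 ≠ c2 := by
    intro h; rw [h] at hc1; linarith [hc1.2, hc2.1]
  have d13 : c1 ≠ c3 := by
    intro h; rw [h] at hc1; linarith [hc1.2, hc3.1]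
  have d14 : c1 ≠ c4 := by
    intro h; rw [h] at hc1; linarith [hc1.2, hc4.1]
  have d15 : c1 ≠ c5 := by
    intro h; rw [h] at hc1; linarith [hc1.2, hc5.1]
  have d23 : c2 ≠ c3 := by
    intro h
    have e : c2 = 95/100 := le_antisymm hc2.2 (by rw [h]; exact hc3.1)
    have : ps (95/100) = 0 := by rw [← e]; exact hr2
    exact s3.ne' this
  have d24 : c2 ≠ c4 := by
    intro h; rw [h] at hc2; linarith [hc2.2, hc4.1]
  have d25 : c2 ≠ c5 := by
    intro h; rw [h] at hc2; linarith [hc2.2, hc5.1]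
  have d34 : c3 ≠ c4 := by
    intro h
    have e : c3 = 995/1000 := le_antisymm hc3.2 (by rw [h]; exact hc4.1)
    have : ps (995/1000) = 0 := by rw [← e]; exact hr3
    exact s4.ne this
  have d35 : c3 ≠ c5 := by
    intro h; rw [h] at hc3; linarith [hc3.2, hc5.1]
  have d45 : c4 ≠ c5 := by
    intro h
    have e : c4 = 999992/1000000 := le_antisymm hc4.2 (by rw [h]; exact hc5.1)
    have : ps (999992/1000000) = 0 := by rw [← e]; exact hr4
    exact s5.ne' this
  refine ⟨{(c1, ph c1), (c2, ph c2), (c3, ph c3), (c4, ph c4), (c5, ph c5)}, ?_, ?_⟩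
  · have n5 : ((c4, ph c4) : ℝ × ℝ) ∉ ({(c5, ph c5)} : Finset (ℝ × ℝ)) := by
      simp only [Finset.mem_singleton]
      exact fun h => d45 (congrArg Prod.fst h)
    have n4 : ((c3, ph c3) : ℝ × ℝ) ∉ ({(c4, ph c4), (c5, ph c5)} : Finset (ℝ × ℝ)) := by
      simp only [Finset.mem_insert, Finset.mem_singleton]
      push_neg
      exact ⟨fun h => d34 (congrArg Prod.fst h), fun h => d35 (congrArg Prod.fst h)⟩
    have n3 : ((c2, ph c2) : ℝ × ℝ) ∉
        ({(c3, ph c3), (c4, ph c4), (c5, ph c5)} : Finset (ℝ × ℝ)) := by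
      simp only [Finset.mem_insert, Finset.mem_singleton]
      push_neg
      exact ⟨fun h => d23 (congrArg Prod.fst h), fun h => d24 (congrArg Prod.fst h),
        fun h => d25 (congrArg Prod.fst h)⟩
    have n2 : ((c1, ph c1) : ℝ × ℝ) ∉
        ({(c2, ph c2), (c3, ph c3), (c4, ph c4), (c5, ph c5)} : Finset (ℝ × ℝ)) := by
      simp only [Finset.mem_insert, Finset.mem_singleton]
      push_neg
      exact ⟨fun h => d12 (congrArg Prod.fst h), fun h => d13 (congrArg Prod.fst h),
        fun h => d14 (congrArg Prod.fst h), fun h => d15 (congrArg Prod.fst h)⟩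
    rw [Finset.card_insert_of_notMem n2, Finset.card_insert_of_notMem n3,
      Finset.card_insert_of_notMem n4, Finset.card_insert_of_notMem n5,
      Finset.card_singleton]
  · intro p hp
    simp only [Finset.mem_insert, Finset.mem_singleton] at hp
    rcases hp with h | h | h | h | h <;> subst h
    · exact sp1
    · exact sp2
    · exact sp3
    · exact sp4
    · exact sp5
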